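/- Let n ≥ 1 and let μ₁, …, μ_l be positive integers. In the field K = ℚ(q,t,x₁,…,x_n), write p_k = x₁^k + … + x_n^k. Then ∑_{i=1}^{n} ( ∏_{j≠i} (t x_i − x_j)/(x_i − x_j) ) · ∏_{a=1}^{l} ( p_{μ_a} + (q^{μ_a} − 1) x_i^{μ_a} ) = (1/(1−t)) ∏_{a=1}^{l} p_{μ_a} + (t^n/(t−1)) · [ ∏_{i=1}^{n} (1 − z x_i)/(1 − z x_i t) · ∏_{a=1}^{l} ( p_{μ_a} + (q^{μ_a} − 1)(t z)^{−μ_a} ) ]_{z⁰}, where [·]_{z⁰} denotes the coefficient of z⁰ in the product of the formal power series expansion in z of ∏_i (1 − z x_i)/(1 − z x_i t) (expanding each 1/(1 − z x_i t) as a geometric series over K) with the Laurent polynomial ∏_a ( p_{μ_a} + (q^{μ_a} − 1)(t z)^{−μ_a} ) in z^{−1}. -/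

import Mathlib

noncomputable section

/-- The field `K = ℚ(q, t, x₁, …, x_n)`: `q` is the variable `Sum.inr 0`, `t` the variable
`Sum.inr 1`, and `x_i` the variable `Sum.inl i`. -/
abbrev K (n : ℕ) : Type := FractionRing (MvPolynomial (Fin n ⊕ Fin 2) ℚ)

def qv (n : ℕ) : K n :=
  algebraMap (MvPolynomial (Fin n ⊕ Fin 2) ℚ) (K n) (MvPolynomial.X (Sum.inr 0))

def tv (n : ℕ) : K n :=
  algebraMap (MvPolynomial (Fin n ⊕ Fin 2) ℚ) (K n) (MvPolynomial.X (Sum.inr 1))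

def xv (n : ℕ) (i : Fin n) : K n :=
  algebraMap (MvPolynomial (Fin n ⊕ Fin 2) ℚ) (K n) (MvPolynomial.X (Sum.inl i))

/-- The power sum `p_k = x₁^k + ⋯ + x_n^k`. -/
def pw (n : ℕ) (k : ℕ) : K n := ∑ i : Fin n, xv n i ^ k

/-- The constant embedding `K → K((z))` into formal Laurent series. -/
def cl (n : ℕ) : K n →+* LaurentSeries (K n) := HahnSeries.C

/-- The Laurent series variable `z`. -/
def zl (n : ℕ) : LaurentSeries (K n) := HahnSeries.single 1 1

namespace D1Aux

lemma alg_inj (n : ℕ) :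
    Function.Injective (algebraMap (MvPolynomial (Fin n ⊕ Fin 2) ℚ) (K n)) :=
  IsFractionRing.injective _ _

lemma tv_ne_zero (n : ℕ) : tv n ≠ 0 := by
  intro h
  have := alg_inj n (h.trans (map_zero _).symm)
  exact MvPolynomial.X_ne_zero _ this

lemma tv_ne_one (n : ℕ) : tv n ≠ 1 := by
  intro h
  have h2 := alg_inj n (h.trans (map_one _).symm)
  have := congrArg MvPolynomial.constantCoeff h2
  simp at this

lemma xv_ne_zero (n : ℕ) (i : Fin n) : xv n i ≠ 0 := by
  intro h
  have := alg_inj n (h.trans (map_zero _).symm)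
  exact MvPolynomial.X_ne_zero _ this

lemma xv_inj (n : ℕ) : Function.Injective (xv n) := by
  intro i j h
  have := MvPolynomial.X_injective (R := ℚ) (alg_inj n h)
  exact Sum.inl_injective this

/-- geometric series `∑ c^k z^k` -/
def geom (n : ℕ) (c : K n) : LaurentSeries (K n) :=
  HahnSeries.ofPowerSeries ℤ (K n) (PowerSeries.mk fun k => c ^ k)

lemma ps_geom (R : Type*) [CommRing R] (c : R) :
    (1 - PowerSeries.C c * PowerSeries.X) * PowerSeries.mk (fun k => c ^ k) = 1 := by
  ext k
  rw [sub_mul, one_mul, mul_assoc]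
  cases k with
  | zero => simp
  | succ m =>
    simp [PowerSeries.coeff_succ_X_mul, pow_succ, mul_comm]

lemma geom_mul (n : ℕ) (c : K n) : (1 - zl n * cl n c) * geom n c = 1 := by
  have := congrArg (HahnSeries.ofPowerSeries ℤ (K n)) (ps_geom (K n) c)
  rw [map_mul, map_sub, map_one, map_mul] at this
  have hcx : (HahnSeries.ofPowerSeries ℤ (K n)) (PowerSeries.C c) *
      (HahnSeries.ofPowerSeries ℤ (K n)) PowerSeries.X = zl n * cl n c := by
    rw [HahnSeries.ofPowerSeries_C, HahnSeries.ofPowerSeries_X, mul_comm]; rfl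
  rw [hcx] at this
  simp only [geom]
  exact this

lemma geom_coeff (n : ℕ) (c : K n) (m : ℕ) : (geom n c).coeff (m : ℤ) = c ^ m := by
  rw [geom, HahnSeries.ofPowerSeries_apply_coeff]
  simp

lemma geom_one_eq (n : ℕ) : geom n 0 = 1 := by
  rw [geom]
  have : (PowerSeries.mk fun k => (0:K n) ^ k) = 1 := by
    ext k
    simp [PowerSeries.coeff_one, zero_pow_eq]
  rw [this, map_one]

lemma zpow_single (n : ℕ) (m : ℕ) :
    (cl n (tv n) * zl n) ^ (-(m : ℤ)) = HahnSeries.single (-(m:ℤ)) ((tv n ^ m)⁻¹) := by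
  have h1 : cl n (tv n) * zl n = HahnSeries.single (1:ℤ) (tv n) := by
    rw [cl, zl, HahnSeries.C_apply, HahnSeries.single_mul_single]
    simp
  have h2 : (cl n (tv n) * zl n) ^ m = HahnSeries.single (m:ℤ) (tv n ^ m) := by
    rw [h1, HahnSeries.single_pow]; simp
  rw [zpow_neg, zpow_natCast, h2]
  refine inv_eq_of_mul_eq_one_right ?_
  rw [HahnSeries.single_mul_single]
  rw [mul_inv_cancel₀ (pow_ne_zero _ (tv_ne_zero n)), add_neg_cancel]
  rfl

lemma shift_coeff (n : ℕ) (μ : ℕ) (e : K n) (H : LaurentSeries (K n)) (m : ℤ) :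
    (HahnSeries.single (-(μ:ℤ)) e * H).coeff m = e * H.coeff (m + μ) := by
  have := HahnSeries.coeff_single_mul_add (r := e) (x := H) (a := m + μ) (b := -(μ:ℤ))
  simpa using this

lemma C_mul_coeff (n : ℕ) (c : K n) (H : LaurentSeries (K n)) (m : ℤ) :
    (cl n c * H).coeff m = c * H.coeff m := by
  rw [cl, HahnSeries.C_apply, HahnSeries.coeff_single_zero_mul]

lemma sum_coeff (n : ℕ) {ι : Type*} (s : Finset ι) (f : ι → LaurentSeries (K n)) (m : ℤ) :
    (∑ i ∈ s, f i).coeff m = ∑ i ∈ s, (f i).coeff m :=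
  map_sum (HahnSeries.coeff.addMonoidHom m) f s

lemma key_coeff (n l : ℕ) (μ : Fin l → ℕ) (p e : Fin l → K n) (c : K n)
    (s : Finset (Fin l)) (m : ℕ) :
    (geom n c * ∏ a ∈ s, (cl n (p a) + HahnSeries.single (-(μ a : ℤ)) (e a))).coeff (m : ℤ)
      = c ^ m * ∏ a ∈ s, (p a + e a * c ^ (μ a)) := by
  induction s using Finset.cons_induction generalizing m with
  | empty => simp [geom_coeff]
  | cons b s hb ih =>
    rw [Finset.prod_cons, Finset.prod_cons]
    have hre : geom n c * ((cl n (p b) + HahnSeries.single (-(μ b:ℤ)) (e b)) *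
        ∏ a ∈ s, (cl n (p a) + HahnSeries.single (-(μ a : ℤ)) (e a)))
        = cl n (p b) * (geom n c * ∏ a ∈ s, (cl n (p a) + HahnSeries.single (-(μ a : ℤ)) (e a)))
          + HahnSeries.single (-(μ b:ℤ)) (e b) *
            (geom n c * ∏ a ∈ s, (cl n (p a) + HahnSeries.single (-(μ a : ℤ)) (e a))) := by
      ring
    rw [hre, HahnSeries.coeff_add, C_mul_coeff, shift_coeff, ih m]
    have : ((m : ℤ) + (μ b : ℤ)) = ((m + μ b : ℕ) : ℤ) := by push_cast; ring
    rw [this, ih (m + μ b), pow_add]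
    ring

open Polynomial in
lemma natDeg_lin_prod {F : Type*} [Field F] {ι : Type*} (s : Finset ι) (c : ι → F) :
    (∏ i ∈ s, (1 - Polynomial.C (c i) * Polynomial.X)).natDegree ≤ s.card := by
  refine (Polynomial.natDegree_prod_le _ _).trans ?_
  calc ∑ i ∈ s, (1 - Polynomial.C (c i) * Polynomial.X).natDegree
      ≤ ∑ i ∈ s, 1 := by
        refine Finset.sum_le_sum fun i _ => ?_
        refine (Polynomial.natDegree_sub_le _ _).trans ?_
        simp
        exact (Polynomial.natDegree_C_mul_le _ _).trans (by simp)
    _ = s.card := by simp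

open Polynomial in
lemma coeff_lin_prod {F : Type*} [Field F] {ι : Type*} (s : Finset ι) (c : ι → F) :
    (∏ i ∈ s, (1 - Polynomial.C (c i) * Polynomial.X)).coeff s.card = ∏ i ∈ s, (-(c i)) := by
  have h := Polynomial.coeff_prod_of_natDegree_le (s := s)
      (fun i => 1 - Polynomial.C (c i) * Polynomial.X) 1 (fun p _ => by
        refine (Polynomial.natDegree_sub_le _ _).trans ?_
        simp
        exact (Polynomial.natDegree_C_mul_le _ _).trans (by simp))
  rw [mul_one] at h
  rw [h]
  refine Finset.prod_congr rfl fun i _ => ?_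
  simp [Polynomial.coeff_one]

open Polynomial in
lemma eval_lin_prod {F : Type*} [Field F] {ι : Type*} (s : Finset ι) (c : ι → F) (z : F) :
    (∏ i ∈ s, (1 - Polynomial.C (c i) * Polynomial.X)).eval z = ∏ i ∈ s, (1 - c i * z) := by
  rw [Polynomial.eval_prod]
  exact Finset.prod_congr rfl fun i _ => by simp

open Polynomial in
lemma poly_id {F : Type*} [Field F] (n : ℕ) (hn : 1 ≤ n) (T : F) (X : Fin n → F)
    (hT : T ≠ 0) (hX0 : ∀ i, X i ≠ 0) (hXinj : Function.Injective X) :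
    Polynomial.C (T ^ n) * ∏ i : Fin n, (1 - Polynomial.C (X i) * Polynomial.X) -
      ∏ i : Fin n, (1 - Polynomial.C (T * X i) * Polynomial.X) =
    Polynomial.C (T - 1) *
      ∑ i : Fin n, Polynomial.C (∏ j ∈ Finset.univ.erase i, (T * X i - X j) / (X i - X j)) *
        ∏ j ∈ Finset.univ.erase i, (1 - Polynomial.C (T * X j) * Polynomial.X) := by
  have hTX : ∀ i, T * X i ≠ 0 := fun i => mul_ne_zero hT (hX0 i)
  have hXd : ∀ i j : Fin n, i ≠ j → X i - X j ≠ 0 := fun i j hij =>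
    sub_ne_zero.mpr (fun h => hij (hXinj h))
  refine Polynomial.eq_of_degrees_lt_of_eval_index_eq (v := fun i => (T * X i)⁻¹)
    Finset.univ ?_ ?_ ?_ ?_
  · intro i _ j _ h
    simp only at h
    exact hXinj (mul_left_cancel₀ hT (inv_injective h))
  · rw [Finset.card_univ, Fintype.card_fin]
    rw [Polynomial.degree_lt_iff_coeff_zero]
    intro m hm
    rcases eq_or_lt_of_le hm with he | hlt
    · rw [← he]
      rw [Polynomial.coeff_sub, Polynomial.coeff_C_mul]
      have e1 := coeff_lin_prod (Finset.univ : Finset (Fin n)) X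
      have e2 := coeff_lin_prod (Finset.univ : Finset (Fin n)) (fun i => T * X i)
      rw [Finset.card_univ, Fintype.card_fin] at e1 e2
      rw [e1, e2]
      have : ∀ (c : Fin n → F), ∏ i : Fin n, (-(c i)) = (-1)^n * ∏ i : Fin n, c i := by
        intro c
        calc ∏ i : Fin n, (-(c i)) = ∏ i : Fin n, ((-1) * c i) := by
              refine Finset.prod_congr rfl fun i _ => by ring
          _ = (-1)^n * ∏ i : Fin n, c i := by
              rw [Finset.prod_mul_distrib, Finset.prod_const, Finset.card_univ,
                Fintype.card_fin]
      rw [this X, this (fun i => T * X i), Finset.prod_mul_distrib, Finset.prod_const,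
        Finset.card_univ, Fintype.card_fin]
      ring
    · rw [Polynomial.coeff_sub, Polynomial.coeff_C_mul]
      rw [Polynomial.coeff_eq_zero_of_natDegree_lt, Polynomial.coeff_eq_zero_of_natDegree_lt]
      · ring
      · exact lt_of_le_of_lt (by simpa using natDeg_lin_prod Finset.univ (fun i => T * X i)) hlt
      · exact lt_of_le_of_lt (by simpa using natDeg_lin_prod Finset.univ X) hlt
  · rw [Finset.card_univ, Fintype.card_fin]
    rw [Polynomial.degree_lt_iff_coeff_zero]
    intro m hm
    rw [Polynomial.coeff_C_mul, Polynomial.finset_sum_coeff]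
    have : ∀ i : Fin n, (Polynomial.C (∏ j ∈ Finset.univ.erase i, (T * X i - X j) / (X i - X j)) *
        ∏ j ∈ Finset.univ.erase i, (1 - Polynomial.C (T * X j) * Polynomial.X)).coeff m = 0 := by
      intro i
      have h1 : (∏ j ∈ Finset.univ.erase i,
          (1 - Polynomial.C (T * X j) * Polynomial.X)).natDegree ≤ (Finset.univ.erase i).card :=
        natDeg_lin_prod _ _
      have h2 : (Finset.univ.erase i).card = n - 1 := by
        rw [Finset.card_erase_of_mem (Finset.mem_univ i), Finset.card_univ, Fintype.card_fin]
      rw [Polynomial.coeff_C_mul, Polynomial.coeff_eq_zero_of_natDegree_lt (by omega), mul_zero]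
    rw [Finset.sum_congr rfl (fun i _ => this i), Finset.sum_const_zero, mul_zero]
  · intro i _
    simp only [Polynomial.eval_sub, Polynomial.eval_mul, Polynomial.eval_C, eval_lin_prod,
      Polynomial.eval_finset_sum]
    have hzero : ∏ j : Fin n, (1 - T * X j * (T * X i)⁻¹) = 0 := by
      refine Finset.prod_eq_zero (Finset.mem_univ i) ?_
      rw [mul_inv_cancel₀ (hTX i), sub_self]
    rw [hzero, sub_zero]
    rw [Finset.sum_eq_single i ?_ (by simp)]
    swap
    · intro k _ hk
      have hz : ∏ j ∈ Finset.univ.erase k, (1 - T * X j * (T * X i)⁻¹) = 0 :=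
        Finset.prod_eq_zero (Finset.mem_erase.mpr ⟨Ne.symm hk, Finset.mem_univ i⟩)
          (by rw [mul_inv_cancel₀ (hTX i), sub_self])
      rw [hz, mul_zero]
    have hsplit : ∏ j : Fin n, (1 - X j * (T * X i)⁻¹)
        = (1 - X i * (T * X i)⁻¹) * ∏ j ∈ Finset.univ.erase i, (1 - X j * (T * X i)⁻¹) :=
      (Finset.mul_prod_erase _ _ (Finset.mem_univ i)).symm
    rw [hsplit]
    have hfac : ∀ j ∈ Finset.univ.erase i,
        T * (1 - X j * (T * X i)⁻¹)
          = (T * X i - X j) / (X i - X j) * (1 - T * X j * (T * X i)⁻¹) := by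
      intro j hj
      have hji : j ≠ i := (Finset.mem_erase.mp hj).1
      have h1 : X i - X j ≠ 0 := hXd i j (Ne.symm hji)
      have hXi := hX0 i
      field_simp
    have hprod : T ^ (n - 1) * ∏ j ∈ Finset.univ.erase i, (1 - X j * (T * X i)⁻¹)
        = ∏ j ∈ Finset.univ.erase i,
            ((T * X i - X j) / (X i - X j) * (1 - T * X j * (T * X i)⁻¹)) := by
      rw [← Finset.prod_congr rfl hfac, Finset.prod_mul_distrib, Finset.prod_const,
        Finset.card_erase_of_mem (Finset.mem_univ i), Finset.card_univ, Fintype.card_fin]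
    have hpre : T ^ n * (1 - X i * (T * X i)⁻¹) = (T - 1) * T ^ (n - 1) := by
      have hTn : T ^ n = T ^ (n - 1) * T := by
        rw [← pow_succ]; congr 1; omega
      have hXi := hX0 i
      rw [hTn]
      field_simp
    calc T ^ n * ((1 - X i * (T * X i)⁻¹) * ∏ j ∈ Finset.univ.erase i, (1 - X j * (T * X i)⁻¹))
        = (T - 1) * (T ^ (n-1) * ∏ j ∈ Finset.univ.erase i, (1 - X j * (T * X i)⁻¹)) := by
          rw [← mul_assoc, hpre]; ring
      _ = (T - 1) * ((∏ j ∈ Finset.univ.erase i, (T * X i - X j) / (X i - X j)) *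
            ∏ j ∈ Finset.univ.erase i, (1 - T * X j * (T * X i)⁻¹)) := by
          rw [hprod, Finset.prod_mul_distrib]

end D1Aux
open D1Aux in
set_option maxHeartbeats 1600000 in
/-- The `D¹_n`-identity on power sums: in `K = ℚ(q,t,x₁,…,x_n)`,
`∑_i (∏_{j≠i} (t x_i - x_j)/(x_i - x_j)) ∏_a (p_{μ_a} + (q^{μ_a}-1) x_i^{μ_a})
 = (1/(1-t)) ∏_a p_{μ_a} + (t^n/(t-1)) [∏_i (1-z x_i)/(1-z x_i t) ·
    ∏_a (p_{μ_a} + (q^{μ_a}-1)(tz)^{-μ_a})]_{z⁰}`,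
where the bracket is the coefficient of `z⁰` in the formal Laurent series, each
`1/(1 - z x_i t)` being expanded as a geometric power series in `z` (which is its inverse in
the field of formal Laurent series `K((z))`). -/
theorem D1_vertex_identity (n l : ℕ) (hn : 1 ≤ n) (μ : Fin l → ℕ) (hμ : ∀ a, 1 ≤ μ a) :
    ∑ i : Fin n,
        (∏ j ∈ Finset.univ.erase i, (tv n * xv n i - xv n j) / (xv n i - xv n j)) *
          ∏ a : Fin l, (pw n (μ a) + (qv n ^ μ a - 1) * xv n i ^ μ a) =
      (1 / (1 - tv n)) * ∏ a : Fin l, pw n (μ a) +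
        (tv n ^ n / (tv n - 1)) *
          (((∏ i : Fin n,
              (1 - zl n * cl n (xv n i)) / (1 - zl n * cl n (xv n i) * cl n (tv n))) *
            ∏ a : Fin l,
              (cl n (pw n (μ a)) +
                cl n (qv n ^ μ a - 1) * (cl n (tv n) * zl n) ^ (-(μ a : ℤ)))).coeff 0) := by
  classical
  have hT0 : tv n ≠ 0 := tv_ne_zero n
  have hT1 : tv n ≠ 1 := tv_ne_one n
  set F : LaurentSeries (K n) :=
    ∏ i : Fin n, (1 - zl n * cl n (xv n i)) / (1 - zl n * cl n (xv n i) * cl n (tv n)) with hFdef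
  set G : LaurentSeries (K n) :=
    ∏ a : Fin l, (cl n (pw n (μ a)) +
      cl n (qv n ^ μ a - 1) * (cl n (tv n) * zl n) ^ (-(μ a : ℤ))) with hGdef
  -- Laurent series version of the partial fraction identity
  have hpoly := poly_id n hn (tv n) (xv n) hT0 (xv_ne_zero n) (xv_inj n)
  have hL : cl n (tv n ^ n) * ∏ i : Fin n, (1 - cl n (xv n i) * zl n) -
      ∏ i : Fin n, (1 - cl n (tv n * xv n i) * zl n) =
      cl n (tv n - 1) * ∑ i : Fin n,
        cl n (∏ j ∈ Finset.univ.erase i, (tv n * xv n i - xv n j) / (xv n i - xv n j)) *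
          ∏ j ∈ Finset.univ.erase i, (1 - cl n (tv n * xv n j) * zl n) := by
    have := congrArg (fun P => Polynomial.eval₂ (cl n) (zl n) P) hpoly
    simpa only [Polynomial.eval₂_sub, Polynomial.eval₂_mul, Polynomial.eval₂_C,
      Polynomial.eval₂_X, Polynomial.eval₂_one, Polynomial.eval₂_finset_prod,
      Polynomial.eval₂_finset_sum] using this
  have hden1 : ∀ i : Fin n, (1 - cl n (tv n * xv n i) * zl n) * geom n (tv n * xv n i) = 1 := by
    intro i
    simpa [mul_comm] using geom_mul n (tv n * xv n i)
  have hden0 : ∀ i : Fin n, (1 - cl n (tv n * xv n i) * zl n) ≠ 0 := fun i =>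
    left_ne_zero_of_mul_eq_one (hden1 i)
  have hfrac : ∀ i : Fin n, (1 - zl n * cl n (xv n i)) / (1 - zl n * cl n (xv n i) * cl n (tv n))
      = (1 - cl n (xv n i) * zl n) * geom n (tv n * xv n i) := by
    intro i
    have hFden : 1 - zl n * cl n (xv n i) * cl n (tv n) = 1 - cl n (tv n * xv n i) * zl n := by
      rw [map_mul]; ring
    rw [hFden, div_eq_iff (hden0 i)]
    linear_combination (cl n (xv n i) * zl n - 1) * (hden1 i)
  have hF : F = (∏ i : Fin n, (1 - cl n (xv n i) * zl n)) *
      ∏ i : Fin n, geom n (tv n * xv n i) := by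
    rw [hFdef, ← Finset.prod_mul_distrib]
    exact Finset.prod_congr rfl fun i _ => hfrac i
  have hGam : (∏ i : Fin n, (1 - cl n (tv n * xv n i) * zl n)) *
      ∏ i : Fin n, geom n (tv n * xv n i) = 1 := by
    rw [← Finset.prod_mul_distrib, Finset.prod_congr rfl fun i _ => hden1 i,
      Finset.prod_const_one]
  have hGami : ∀ i : Fin n, (∏ j ∈ Finset.univ.erase i, (1 - cl n (tv n * xv n j) * zl n)) *
      ∏ j : Fin n, geom n (tv n * xv n j) = geom n (tv n * xv n i) := by
    intro i
    rw [← Finset.mul_prod_erase _ (fun j => geom n (tv n * xv n j)) (Finset.mem_univ i)]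
    calc (∏ j ∈ Finset.univ.erase i, (1 - cl n (tv n * xv n j) * zl n)) *
          (geom n (tv n * xv n i) * ∏ j ∈ Finset.univ.erase i, geom n (tv n * xv n j))
        = geom n (tv n * xv n i) *
            ((∏ j ∈ Finset.univ.erase i, (1 - cl n (tv n * xv n j) * zl n)) *
              ∏ j ∈ Finset.univ.erase i, geom n (tv n * xv n j)) := by ring
      _ = geom n (tv n * xv n i) := by
          rw [← Finset.prod_mul_distrib, Finset.prod_congr rfl fun j _ => hden1 j,
            Finset.prod_const_one, mul_one]
  have hL' : cl n (tv n ^ n) * ∏ i : Fin n, (1 - cl n (xv n i) * zl n) =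
      ∏ i : Fin n, (1 - cl n (tv n * xv n i) * zl n) +
      cl n (tv n - 1) * ∑ i : Fin n,
        cl n (∏ j ∈ Finset.univ.erase i, (tv n * xv n i - xv n j) / (xv n i - xv n j)) *
          ∏ j ∈ Finset.univ.erase i, (1 - cl n (tv n * xv n j) * zl n) := by
    rw [← hL]; ring
  have hKey : cl n (tv n ^ n) * (F * G) = G + cl n (tv n - 1) * ∑ i : Fin n,
      cl n (∏ j ∈ Finset.univ.erase i, (tv n * xv n i - xv n j) / (xv n i - xv n j)) *
        (geom n (tv n * xv n i) * G) := by
    calc cl n (tv n ^ n) * (F * G)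
        = (cl n (tv n ^ n) * ∏ i : Fin n, (1 - cl n (xv n i) * zl n)) *
            ((∏ i : Fin n, geom n (tv n * xv n i)) * G) := by rw [hF]; ring
      _ = ((∏ i : Fin n, (1 - cl n (tv n * xv n i) * zl n)) +
            cl n (tv n - 1) * ∑ i : Fin n,
              cl n (∏ j ∈ Finset.univ.erase i, (tv n * xv n i - xv n j) / (xv n i - xv n j)) *
                ∏ j ∈ Finset.univ.erase i, (1 - cl n (tv n * xv n j) * zl n)) *
            ((∏ i : Fin n, geom n (tv n * xv n i)) * G) := by rw [hL']
      _ = ((∏ i : Fin n, (1 - cl n (tv n * xv n i) * zl n)) *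
            ∏ i : Fin n, geom n (tv n * xv n i)) * G +
          cl n (tv n - 1) * ∑ i : Fin n,
            cl n (∏ j ∈ Finset.univ.erase i, (tv n * xv n i - xv n j) / (xv n i - xv n j)) *
              (((∏ j ∈ Finset.univ.erase i, (1 - cl n (tv n * xv n j) * zl n)) *
                ∏ j : Fin n, geom n (tv n * xv n j)) * G) := by
          rw [add_mul]
          congr 1
          · ring
          · rw [mul_assoc, Finset.sum_mul]
            congr 1
            refine Finset.sum_congr rfl fun i _ => ?_
            ring
      _ = G + cl n (tv n - 1) * ∑ i : Fin n,
            cl n (∏ j ∈ Finset.univ.erase i, (tv n * xv n i - xv n j) / (xv n i - xv n j)) *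
              (geom n (tv n * xv n i) * G) := by
          rw [hGam, one_mul]
          congr 2
          refine Finset.sum_congr rfl fun i _ => ?_
          rw [hGami i]
  -- coefficient extraction
  have hGform : G = ∏ a : Fin l, (cl n (pw n (μ a)) +
      HahnSeries.single (-(μ a : ℤ)) ((qv n ^ μ a - 1) * (tv n ^ μ a)⁻¹)) := by
    rw [hGdef]
    refine Finset.prod_congr rfl fun a _ => ?_
    rw [zpow_single n (μ a)]
    congr 1
    rw [cl, HahnSeries.C_apply, HahnSeries.single_mul_single, zero_add]
  have hG0 : G.coeff 0 = ∏ a : Fin l, pw n (μ a) := by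
    have h := key_coeff n l μ (fun a => pw n (μ a))
      (fun a => (qv n ^ μ a - 1) * (tv n ^ μ a)⁻¹) 0 Finset.univ 0
    rw [geom_one_eq, one_mul, Nat.cast_zero, pow_zero, one_mul] at h
    rw [hGform, h]
    refine Finset.prod_congr rfl fun a _ => ?_
    rw [zero_pow (Nat.one_le_iff_ne_zero.mp (hμ a)), mul_zero, add_zero]
  have hGi : ∀ i : Fin n, (geom n (tv n * xv n i) * G).coeff 0 =
      ∏ a : Fin l, (pw n (μ a) + (qv n ^ μ a - 1) * xv n i ^ μ a) := by
    intro i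
    have h := key_coeff n l μ (fun a => pw n (μ a))
      (fun a => (qv n ^ μ a - 1) * (tv n ^ μ a)⁻¹) (tv n * xv n i) Finset.univ 0
    rw [Nat.cast_zero, pow_zero, one_mul] at h
    rw [hGform, h]
    refine Finset.prod_congr rfl fun a _ => ?_
    congr 1
    calc (qv n ^ μ a - 1) * (tv n ^ μ a)⁻¹ * (tv n * xv n i) ^ μ a
        = (qv n ^ μ a - 1) * ((tv n ^ μ a)⁻¹ * tv n ^ μ a) * xv n i ^ μ a := by
          rw [mul_pow]; ring
      _ = (qv n ^ μ a - 1) * xv n i ^ μ a := by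
          rw [inv_mul_cancel₀ (pow_ne_zero _ hT0), mul_one]
  have hcoeff := congrArg (fun H : LaurentSeries (K n) => H.coeff 0) hKey
  simp only [C_mul_coeff, HahnSeries.coeff_add, sum_coeff] at hcoeff
  simp only [hG0, hGi] at hcoeff
  -- final algebra
  have h1T : (1 : K n) - tv n ≠ 0 := sub_ne_zero.mpr fun h => hT1 h.symm
  have hT1' : tv n - 1 ≠ 0 := sub_ne_zero.mpr hT1
  have hTn0 : tv n ^ n ≠ 0 := pow_ne_zero _ hT0
  have hBval : (F * G).coeff 0 = ((∏ a : Fin l, pw n (μ a)) + (tv n - 1) *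
      ∑ i : Fin n,
        (∏ j ∈ Finset.univ.erase i, (tv n * xv n i - xv n j) / (xv n i - xv n j)) *
          ∏ a : Fin l, (pw n (μ a) + (qv n ^ μ a - 1) * xv n i ^ μ a)) / tv n ^ n := by
    rw [eq_div_iff hTn0]
    linear_combination hcoeff
  rw [hBval]
  field_simp
  ring
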